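/- Let 0 < T ≤ π/2, π − T < φ_W < π, and T > −tan φ_W (i.e., (φ_W, T) ∈ D₂'''). Then F²_{φ_W,T} has exactly one positive root, and this root is the unique positive solution of the equation −x·tan φ_W = tanh(Tx). -/

import Mathlib

open Real

/-- The determinant function
`F²_{φ_W,T}(a) = -a² sinh(2aT) sin(2φ_W) + 2a (1 - cosh(2aT) cos(2φ_W)) + sinh(2aT) sin(2φ_W)`. -/
noncomputable def F2 (φW T a : ℝ) : ℝ :=
  -a ^ 2 * Real.sinh (2 * a * T) * Real.sin (2 * φW)
    + 2 * a * (1 - Real.cosh (2 * a * T) * Real.cos (2 * φW))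
    + Real.sinh (2 * a * T) * Real.sin (2 * φW)

/-- The hyperbolic cotangent `coth x = cosh x / sinh x` (not available in Mathlib). -/
noncomputable def Real.coth (x : ℝ) : ℝ := Real.cosh x / Real.sinh x

/-- Derivative of the real hyperbolic tangent. -/
lemma hasDerivAt_tanh' (x : ℝ) : HasDerivAt Real.tanh (1 / Real.cosh x ^ 2) x := by
  have h : HasDerivAt (fun y => Real.sinh y / Real.cosh y)
      ((Real.cosh x * Real.cosh x - Real.sinh x * Real.sinh x) / Real.cosh x ^ 2) x :=
    (Real.hasDerivAt_sinh x).div (Real.hasDerivAt_cosh x) (ne_of_gt (Real.cosh_pos x))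
  have heq : (fun y => Real.sinh y / Real.cosh y) = Real.tanh := by
    funext y; rw [Real.tanh_eq_sinh_div_cosh]
  have h2 : Real.cosh x * Real.cosh x - Real.sinh x * Real.sinh x = 1 := by
    nlinarith [Real.cosh_sq_sub_sinh_sq x]
  rw [heq, h2] at h
  exact h

lemma tanh_lt_one' (x : ℝ) : Real.tanh x < 1 := by
  rw [Real.tanh_eq_sinh_div_cosh, div_lt_one (Real.cosh_pos x)]
  nlinarith [Real.exp_pos (-x), Real.cosh_eq x, Real.sinh_eq x]

/-- For `0 < t < T`, the equation `tanh (T x) = t x` has a unique positive solution. -/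
lemma unique_root_tanh (T t : ℝ) (hT0 : 0 < T) (ht : 0 < t) (htT : t < T) :
    ∃ a : ℝ, 0 < a ∧ Real.tanh (T * a) = t * a ∧
      ∀ b : ℝ, 0 < b → Real.tanh (T * b) = t * b → b = a := by
  set H : ℝ → ℝ := fun x => Real.tanh (T * x) - t * x with hHdef
  have hH : ∀ x : ℝ, HasDerivAt H (T / Real.cosh (T * x) ^ 2 - t) x := by
    intro x
    have h1 : HasDerivAt (fun y : ℝ => T * y) T x := by
      simpa using (hasDerivAt_id x).const_mul T
    have h2 : HasDerivAt (fun y : ℝ => Real.tanh (T * y))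
        (1 / Real.cosh (T * x) ^ 2 * T) x := (hasDerivAt_tanh' (T * x)).comp x h1
    have h3 : HasDerivAt (fun y : ℝ => t * y) t x := by
      simpa using (hasDerivAt_id x).const_mul t
    have := h2.sub h3
    rw [show T / Real.cosh (T * x) ^ 2 - t = 1 / Real.cosh (T * x) ^ 2 * T - t by ring]
    exact this
  have hanti : StrictAntiOn (deriv H) (interior (Set.Ici (0:ℝ))) := by
    rw [interior_Ici]
    intro x hx y hy hxy
    rw [(hH x).deriv, (hH y).deriv]
    have hx0 : (0:ℝ) < x := hx
    have hy0 : (0:ℝ) < y := hy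
    have hcc : Real.cosh (T * x) < Real.cosh (T * y) := by
      rw [Real.cosh_lt_cosh, abs_of_pos (by positivity), abs_of_pos (by positivity)]
      exact mul_lt_mul_of_pos_left hxy hT0
    have h2 : Real.cosh (T * x) ^ 2 < Real.cosh (T * y) ^ 2 := by
      have := Real.cosh_pos (T * x)
      nlinarith [Real.cosh_pos (T * y)]
    have hlt : T / Real.cosh (T * y) ^ 2 < T / Real.cosh (T * x) ^ 2 :=
      div_lt_div_of_pos_left hT0 (by positivity) h2
    linarith
  have hcont : ContinuousOn H (Set.Ici (0:ℝ)) :=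
    fun x _ => (hH x).continuousAt.continuousWithinAt
  have hconc : StrictConcaveOn ℝ (Set.Ici (0:ℝ)) H :=
    StrictAntiOn.strictConcaveOn_of_deriv (convex_Ici 0) hcont hanti
  have hH0 : H 0 = 0 := by simp [hHdef]
  have key : ∀ m M : ℝ, 0 < m → m < M → H M = 0 → 0 < H m := by
    intro m M hm hmM hM
    have hM0 : 0 < M := hm.trans hmM
    have hb : 0 < m / M := by positivity
    have hb1 : m / M < 1 := (div_lt_one hM0).2 hmM
    have hcb := hconc.2 (Set.self_mem_Ici) (le_of_lt hM0 : (0:ℝ) ≤ M)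
      (ne_of_lt hM0) (by linarith : (0:ℝ) < 1 - m / M) hb (by ring)
    simp only [smul_eq_mul] at hcb
    have hcomb : (1 - m / M) * (0:ℝ) + m / M * M = m := by field_simp; ring
    rw [hcomb, hH0, hM] at hcb
    simpa using hcb
  have hTt : 1 < T / t := (one_lt_div ht).2 htT
  have htend : Filter.Tendsto (fun x : ℝ => Real.cosh (T * x))
      (nhdsWithin 0 (Set.Ioi 0)) (nhds 1) := by
    have hcts : Continuous fun x : ℝ => Real.cosh (T * x) :=
      Real.continuous_cosh.comp (continuous_const.mul continuous_id)
    have h0 := hcts.tendsto 0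
    simp only [mul_zero, Real.cosh_zero] at h0
    exact h0.mono_left nhdsWithin_le_nhds
  have hev : ∀ᶠ x in nhdsWithin 0 (Set.Ioi 0), Real.cosh (T * x) < T / t :=
    htend.eventually_lt_const hTt
  obtain ⟨p, hp1, hp2⟩ := (hev.and self_mem_nhdsWithin).exists
  have hp2' : (0:ℝ) < p := hp2
  set q : ℝ := min p (1 / t) with hqdef
  have hq0 : 0 < q := lt_min hp2' (by positivity)
  have hqcosh : Real.cosh (T * q) < T / t := by
    refine lt_of_le_of_lt ?_ hp1
    rw [Real.cosh_le_cosh, abs_of_pos (by positivity), abs_of_pos (by positivity)]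
    exact mul_le_mul_of_nonneg_left (min_le_left _ _) (le_of_lt hT0)
  have hHq : 0 < H q := by
    have h1 : T * q / Real.cosh (T * q) ≤ Real.tanh (T * q) := by
      rw [Real.tanh_eq_sinh_div_cosh]
      exact (div_le_div_iff_of_pos_right (Real.cosh_pos _)).2 (Real.self_le_sinh_iff.2 (by positivity))
    have h2 : T * q / (T / t) < T * q / Real.cosh (T * q) :=
      div_lt_div_of_pos_left (by positivity) (Real.cosh_pos _) hqcosh
    have h3 : T * q / (T / t) = t * q := by
      field_simp
    simp only [hHdef]
    rw [← h3] at *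
    linarith
  have hHN : H (2 / t) < 0 := by
    have h1 : Real.tanh (T * (2 / t)) < 1 := tanh_lt_one' _
    have h2 : t * (2 / t) = 2 := by field_simp
    simp only [hHdef]
    rw [h2]
    linarith
  have hqN : q < 2 / t := by
    have h1 : (1:ℝ) / t < 2 / t := (div_lt_div_iff_of_pos_right ht).2 one_lt_two
    exact lt_of_le_of_lt (min_le_right _ _) h1
  have hctsIcc : ContinuousOn H (Set.Icc q (2 / t)) :=
    hcont.mono (Set.Icc_subset_Ici_iff (le_of_lt hqN) |>.2 (le_of_lt hq0))
  have hmem : (0:ℝ) ∈ Set.Icc (H (2 / t)) (H q) := ⟨le_of_lt hHN, le_of_lt hHq⟩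
  obtain ⟨a, haI, ha0⟩ := intermediate_value_Icc' (le_of_lt hqN) hctsIcc hmem
  have ha_pos : 0 < a := lt_of_lt_of_le hq0 haI.1
  refine ⟨a, ha_pos, ?_, ?_⟩
  · have : H a = 0 := ha0
    simp only [hHdef] at this
    linarith
  · intro b hb hbeq
    have hHb : H b = 0 := by simp only [hHdef]; linarith
    have hHa : H a = 0 := ha0
    rcases lt_trichotomy b a with h | h | h
    · exact absurd hHb (ne_of_gt (key b a hb h hHa))
    · exact h
    · exact absurd hHa (ne_of_gt (key a b ha_pos h hHb))

/-- Factorization of `F2`. -/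
lemma factorF2' (φ T b : ℝ) :
    F2 φ T b
    = 4 * (Real.cosh (T*b) * Real.sin φ - b * Real.sinh (T*b) * Real.cos φ)
        * (b * Real.cosh (T*b) * Real.sin φ + Real.sinh (T*b) * Real.cos φ) := by
  unfold F2
  have harg : 2 * b * T = 2 * (T * b) := by ring
  rw [harg, Real.sinh_two_mul, Real.cosh_two_mul, Real.sin_two_mul, Real.cos_two_mul]
  have h1 := Real.cosh_sq_sub_sinh_sq (T*b)
  have h2 := Real.sin_sq_add_cos_sq φ
  linear_combination (-2*b) * h1 + (-4*b*Real.cosh (T*b)^2) * h2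

theorem F2_one_root_on_D2''' (φW T : ℝ) (hT0 : 0 < T) (hT : T ≤ Real.pi / 2)
    (hφ1 : Real.pi - T < φW) (hφ2 : φW < Real.pi) (htan : -Real.tan φW < T) :
    ∃ a : ℝ, 0 < a ∧ F2 φW T a = 0 ∧
      (∀ b : ℝ, 0 < b → F2 φW T b = 0 → b = a) ∧
      -a * Real.tan φW = Real.tanh (T * a) ∧
      (∀ b : ℝ, 0 < b → -b * Real.tan φW = Real.tanh (T * b) → b = a) := by
  have hpi := Real.pi_pos
  have hs : 0 < Real.sin φW := Real.sin_pos_of_pos_of_lt_pi (by linarith) hφ2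
  have hc : Real.cos φW < 0 := Real.cos_neg_of_pi_div_two_lt_of_lt (by linarith) (by linarith)
  have htv : Real.tan φW = Real.sin φW / Real.cos φW := Real.tan_eq_sin_div_cos φW
  set t : ℝ := -Real.tan φW with htdef
  have ht : 0 < t := by rw [htdef, htv]; exact neg_pos.2 (div_neg_of_pos_of_neg hs hc)
  have hiff : ∀ b : ℝ, 0 < b → (F2 φW T b = 0 ↔ Real.tanh (T * b) = t * b) := by
    intro b hb
    rw [factorF2']
    have hC := Real.cosh_pos (T * b)
    have hS : 0 < Real.sinh (T * b) := Real.sinh_pos_iff.2 (by positivity)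
    have hA : 0 < Real.cosh (T*b) * Real.sin φW - b * Real.sinh (T*b) * Real.cos φW := by
      nlinarith [mul_pos hC hs, mul_pos (mul_pos hb hS) (neg_pos.2 hc)]
    constructor
    · intro h
      have hB : b * Real.cosh (T*b) * Real.sin φW + Real.sinh (T*b) * Real.cos φW = 0 := by
        rcases mul_eq_zero.1 h with h' | h'
        · exact absurd h' (by nlinarith)
        · exact h'
      rw [Real.tanh_eq_sinh_div_cosh, htdef, htv, div_eq_iff (ne_of_gt hC)]
      have hcne : Real.cos φW ≠ 0 := ne_of_lt hc
      field_simp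
      nlinarith [hB]
    · intro h
      have hB : b * Real.cosh (T*b) * Real.sin φW + Real.sinh (T*b) * Real.cos φW = 0 := by
        rw [Real.tanh_eq_sinh_div_cosh, htdef, htv, div_eq_iff (ne_of_gt hC)] at h
        have hcne : Real.cos φW ≠ 0 := ne_of_lt hc
        field_simp at h
        nlinarith [h]
      rw [hB, mul_zero]
  have htaneq : ∀ b : ℝ, (-b * Real.tan φW = Real.tanh (T * b) ↔ Real.tanh (T * b) = t * b) := by
    intro b
    constructor <;> intro h <;> rw [htdef] at * <;> linarith
  obtain ⟨a, ha, haeq, hauniq⟩ := unique_root_tanh T t hT0 ht (by rw [htdef]; linarith)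
  refine ⟨a, ha, (hiff a ha).2 haeq, ?_, (htaneq a).2 haeq, ?_⟩
  · intro b hb hbF
    exact hauniq b hb ((hiff b hb).1 hbF)
  · intro b hb hbeq
    exact hauniq b hb ((htaneq b).1 hbeq)
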